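/- For every integer q ≥ 1 and all w, λ ∈ ℂ, the following identity holds: w^q/q! + Σ_{j=1}^{q} ( w^{q−j}/(q−j)! · Σ_{k=0}^{j−1} ((j−k)·w)^k / k! · (−λ)^{j−k} ) = Σ_{j=0}^{q} ((j+1)·w)^{q−j}/(q−j)! · (−λ)^{j}. -/

import Mathlib

open Finset

lemma binom_aux (n p : ℕ) :
    ∑ k ∈ range (n + 1), (p : ℂ) ^ k / ((Nat.factorial k : ℂ) * (Nat.factorial (n - k) : ℂ))
      = ((p : ℂ) + 1) ^ n / (Nat.factorial n : ℂ) := by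
  have h := add_pow (p : ℂ) 1 n
  rw [h, Finset.sum_div]
  apply Finset.sum_congr rfl
  intro k hk
  rw [Finset.mem_range] at hk
  have hk' : k ≤ n := Nat.lt_succ_iff.mp hk
  rw [Nat.cast_choose ℂ hk']
  have h1 : (Nat.factorial k : ℂ) ≠ 0 := Nat.cast_ne_zero.mpr (Nat.factorial_ne_zero k)
  have h2 : (Nat.factorial (n - k) : ℂ) ≠ 0 := Nat.cast_ne_zero.mpr (Nat.factorial_ne_zero _)
  have h3 : (Nat.factorial n : ℂ) ≠ 0 := Nat.cast_ne_zero.mpr (Nat.factorial_ne_zero n)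
  field_simp
  ring

lemma swap_aux (q : ℕ) (f : ℕ → ℕ → ℂ) :
    ∑ j ∈ Icc 1 q, ∑ k ∈ range j, f j k
      = ∑ p ∈ Icc 1 q, ∑ k ∈ range (q - p + 1), f (p + k) k := by
  rw [Finset.sum_sigma', Finset.sum_sigma']
  apply Finset.sum_nbij' (fun x => ⟨x.1 - x.2, x.2⟩) (fun x => ⟨x.1 + x.2, x.2⟩)
  · rintro ⟨a, b⟩ hx
    simp only [Finset.mem_sigma, Finset.mem_Icc, Finset.mem_range] at hx ⊢
    omega
  · rintro ⟨a, b⟩ hx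
    simp only [Finset.mem_sigma, Finset.mem_Icc, Finset.mem_range] at hx ⊢
    omega
  · rintro ⟨a, b⟩ hx
    simp only [Finset.mem_sigma, Finset.mem_Icc, Finset.mem_range] at hx
    simp only [Sigma.mk.inj_iff, heq_eq_eq, and_true]
    omega
  · rintro ⟨a, b⟩ hx
    simp only [Sigma.mk.inj_iff, heq_eq_eq, and_true]
    omega
  · rintro ⟨a, b⟩ hx
    simp only [Finset.mem_sigma, Finset.mem_Icc, Finset.mem_range] at hx
    dsimp only
    rw [Nat.sub_add_cancel (by omega : b ≤ a)]

theorem sum_identity (q : ℕ) (hq : 1 ≤ q) (w l : ℂ) :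
    w ^ q / (Nat.factorial q : ℂ)
      + ∑ j ∈ Icc 1 q, (w ^ (q - j) / ((Nat.factorial (q - j) : ℂ))
          * ∑ k ∈ range j, (((j - k : ℕ) : ℂ) * w) ^ k / ((Nat.factorial k : ℂ)) * (-l) ^ (j - k))
    = ∑ j ∈ range (q + 1),
        (((j + 1 : ℕ) : ℂ) * w) ^ (q - j) / ((Nat.factorial (q - j) : ℂ)) * (-l) ^ j := by
  have lhs2 : ∑ j ∈ Icc 1 q, (w ^ (q - j) / ((Nat.factorial (q - j) : ℂ))
          * ∑ k ∈ range j, (((j - k : ℕ) : ℂ) * w) ^ k / ((Nat.factorial k : ℂ)) * (-l) ^ (j - k))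
      = ∑ j ∈ Icc 1 q, ∑ k ∈ range j,
          ((j - k : ℕ) : ℂ) ^ k / ((Nat.factorial k : ℂ) * (Nat.factorial (q - j) : ℂ))
            * w ^ (q - (j - k)) * (-l) ^ (j - k) := by
    apply Finset.sum_congr rfl
    intro j hj
    rw [Finset.mem_Icc] at hj
    rw [Finset.mul_sum]
    apply Finset.sum_congr rfl
    intro k hk
    rw [Finset.mem_range] at hk
    have h1 : q - (j - k) = (q - j) + k := by omega
    rw [mul_pow, h1, pow_add]
    field_simp
  rw [lhs2, swap_aux q (fun j k => ((j - k : ℕ) : ℂ) ^ k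
      / ((Nat.factorial k : ℂ) * (Nat.factorial (q - j) : ℂ)) * w ^ (q - (j - k)) * (-l) ^ (j - k))]
  -- simplify the reindexed sum
  have step : ∀ p ∈ Icc 1 q,
      (∑ k ∈ range (q - p + 1),
        ((p + k - k : ℕ) : ℂ) ^ k / ((Nat.factorial k : ℂ) * (Nat.factorial (q - (p + k)) : ℂ))
          * w ^ (q - (p + k - k)) * (-l) ^ (p + k - k))
      = (((p + 1 : ℕ) : ℂ) * w) ^ (q - p) / ((Nat.factorial (q - p) : ℂ)) * (-l) ^ p := by
    intro p hp
    rw [Finset.mem_Icc] at hp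
    have key : ∑ k ∈ range (q - p + 1),
        (p : ℂ) ^ k / ((Nat.factorial k : ℂ) * (Nat.factorial (q - p - k) : ℂ))
        = ((p : ℂ) + 1) ^ (q - p) / (Nat.factorial (q - p) : ℂ) := binom_aux (q - p) p
    calc (∑ k ∈ range (q - p + 1),
        ((p + k - k : ℕ) : ℂ) ^ k / ((Nat.factorial k : ℂ) * (Nat.factorial (q - (p + k)) : ℂ))
          * w ^ (q - (p + k - k)) * (-l) ^ (p + k - k))
        = (∑ k ∈ range (q - p + 1),
            (p : ℂ) ^ k / ((Nat.factorial k : ℂ) * (Nat.factorial (q - p - k) : ℂ)))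
            * (w ^ (q - p) * (-l) ^ p) := by
          rw [Finset.sum_mul]
          apply Finset.sum_congr rfl
          intro k hk
          have e1 : p + k - k = p := by omega
          have e2 : q - (p + k) = q - p - k := by omega
          rw [e1, e2]
          ring
      _ = (((p + 1 : ℕ) : ℂ) * w) ^ (q - p) / ((Nat.factorial (q - p) : ℂ)) * (-l) ^ p := by
          rw [key, mul_pow]
          push_cast
          ring
  rw [Finset.sum_congr rfl step]
  -- now split RHS at j = 0
  rw [Finset.range_eq_Ico, Finset.sum_eq_sum_Ico_succ_bot (by omega : 0 < q + 1),
    Finset.Ico_add_one_right_eq_Icc]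
  congr 1
  norm_num
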